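/- Let y₋, y₊ > 0 be real numbers, let H(X) = (y₋² + 1)X² + (3y₋² + y₊y₋ + 2)X + (y₊² + 3y₋² + 3y₊y₋ + 1) and R(X) = (3y₊² + y₋² + 3y₊y₋ + 1)X² + (3y₊² + y₊y₋ + 2)X + (y₊² + 1). Set δ = (y₋² + 1)(3y₊² + y₋² + 3y₊y₋ + 1), η = (y₊y₋(y₊² + y₋² + 3y₊y₋) + y₊² + y₋² + 1)/δ, and θ = ((y₋ + y₊)²(y₊² + y₋² + y₊y₋ + 1)(2y₊²y₋² + 3y₊² + 3y₋² + y₊y₋ + 3))/δ². Then δ > 0, η > 0, θ > 0, and the polynomial identity (X³H(X))'·R(X) − X³H(X)·R'(X) = 3δ·X²·(X + 1)²·((X + η)² + θ) holds in ℝ[X], so that the derivative of f(ξ) = ξ³H(ξ)/R(ξ) equals 3δξ²(ξ+1)²((ξ+η)²+θ)/R(ξ)² and is nonnegative on ℝ. -/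

import Mathlib

/-- The explicit factorization of the numerator of `f'` where `f(ξ) = ξ³H(ξ)/R(ξ)`:
`δ, η, θ > 0`, the polynomial identity
`(X³H)'·R − X³H·R' = 3δX²(X+1)²((X+η)²+θ)` holds, hence
`f'(ξ) = 3δξ²(ξ+1)²((ξ+η)²+θ)/R(ξ)² ≥ 0`. -/
theorem stmt_3 (ym yp : ℝ) (hym : 0 < ym) (hyp : 0 < yp)
    (H R f : ℝ → ℝ) (δ η θ : ℝ)
    (hH : H = fun x : ℝ =>
      (ym ^ 2 + 1) * x ^ 2 + (3 * ym ^ 2 + yp * ym + 2) * x +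
        (yp ^ 2 + 3 * ym ^ 2 + 3 * yp * ym + 1))
    (hR : R = fun x : ℝ =>
      (3 * yp ^ 2 + ym ^ 2 + 3 * yp * ym + 1) * x ^ 2 + (3 * yp ^ 2 + yp * ym + 2) * x +
        (yp ^ 2 + 1))
    (hf : f = fun ξ : ℝ => ξ ^ 3 * H ξ / R ξ)
    (hδ : δ = (ym ^ 2 + 1) * (3 * yp ^ 2 + ym ^ 2 + 3 * yp * ym + 1))
    (hη : η = (yp * ym * (yp ^ 2 + ym ^ 2 + 3 * yp * ym) + yp ^ 2 + ym ^ 2 + 1) / δ)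
    (hθ : θ = ((ym + yp) ^ 2 * (yp ^ 2 + ym ^ 2 + yp * ym + 1) *
      (2 * yp ^ 2 * ym ^ 2 + 3 * yp ^ 2 + 3 * ym ^ 2 + yp * ym + 3)) / δ ^ 2) :
    0 < δ ∧ 0 < η ∧ 0 < θ ∧
    (∀ x : ℝ, deriv (fun ξ : ℝ => ξ ^ 3 * H ξ) x * R x - x ^ 3 * H x * deriv R x =
      3 * δ * x ^ 2 * (x + 1) ^ 2 * ((x + η) ^ 2 + θ)) ∧
    (∀ x : ℝ,
      deriv f x = 3 * δ * x ^ 2 * (x + 1) ^ 2 * ((x + η) ^ 2 + θ) / (R x) ^ 2 ∧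
      0 ≤ deriv f x) := by
  have hδ0 : 0 < δ := by rw [hδ]; positivity
  have hη0 : 0 < η := by
    rw [hη]
    apply div_pos _ hδ0
    positivity
  have hθ0 : 0 < θ := by
    rw [hθ]
    apply div_pos _ (by positivity)
    positivity
  -- derivative of the numerator g ξ = ξ^3 * H ξ
  have hg : ∀ x : ℝ, HasDerivAt (fun ξ : ℝ => ξ ^ 3 * H ξ)
      (3 * x ^ 2 * H x + x ^ 3 * ((ym ^ 2 + 1) * (2 * x) + (3 * ym ^ 2 + yp * ym + 2))) x := by
    intro x
    subst hH
    have h1 : HasDerivAt (fun ξ : ℝ => ξ ^ 3) (3 * x ^ 2) x := by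
      simpa using hasDerivAt_pow 3 x
    have h2 : HasDerivAt (fun ξ : ℝ =>
        (ym ^ 2 + 1) * ξ ^ 2 + (3 * ym ^ 2 + yp * ym + 2) * ξ +
          (yp ^ 2 + 3 * ym ^ 2 + 3 * yp * ym + 1))
        ((ym ^ 2 + 1) * (2 * x) + (3 * ym ^ 2 + yp * ym + 2)) x := by
      have := (((hasDerivAt_pow 2 x).const_mul (ym ^ 2 + 1)).add
        ((hasDerivAt_id x).const_mul (3 * ym ^ 2 + yp * ym + 2))).add_const
        (yp ^ 2 + 3 * ym ^ 2 + 3 * yp * ym + 1)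
      simpa [mul_comm, mul_assoc, mul_left_comm] using this
    exact h1.mul h2
  have hRd : ∀ x : ℝ, HasDerivAt R
      ((3 * yp ^ 2 + ym ^ 2 + 3 * yp * ym + 1) * (2 * x) + (3 * yp ^ 2 + yp * ym + 2)) x := by
    intro x
    subst hR
    have := (((hasDerivAt_pow 2 x).const_mul (3 * yp ^ 2 + ym ^ 2 + 3 * yp * ym + 1)).add
      ((hasDerivAt_id x).const_mul (3 * yp ^ 2 + yp * ym + 2))).add_const (yp ^ 2 + 1)
    simpa [mul_comm, mul_assoc, mul_left_comm] using this
  have hRpos : ∀ x : ℝ, 0 < R x := by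
    intro x
    rw [hR]
    show 0 < (3 * yp ^ 2 + ym ^ 2 + 3 * yp * ym + 1) * x ^ 2 + (3 * yp ^ 2 + yp * ym + 2) * x +
      (yp ^ 2 + 1)
    nlinarith [sq_nonneg (2 * (3 * yp ^ 2 + ym ^ 2 + 3 * yp * ym + 1) * x +
      (3 * yp ^ 2 + yp * ym + 2)), mul_pos hym hyp, sq_nonneg (ym * yp), sq_nonneg ym,
      sq_nonneg yp, mul_pos (mul_pos hym hyp) (mul_pos hyp hyp), sq_nonneg (ym * yp * yp)]
  have key : ∀ x : ℝ,
      (3 * x ^ 2 * H x + x ^ 3 * ((ym ^ 2 + 1) * (2 * x) + (3 * ym ^ 2 + yp * ym + 2))) * R x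
        - x ^ 3 * H x * ((3 * yp ^ 2 + ym ^ 2 + 3 * yp * ym + 1) * (2 * x) +
            (3 * yp ^ 2 + yp * ym + 2)) =
      3 * δ * x ^ 2 * (x + 1) ^ 2 * ((x + η) ^ 2 + θ) := by
    intro x
    subst hH hR hη hθ
    have hδne : δ ≠ 0 := ne_of_gt hδ0
    field_simp
    rw [hδ]
    ring
  refine ⟨hδ0, hη0, hθ0, ?_, ?_⟩
  · intro x
    rw [(hg x).deriv, (hRd x).deriv]
    exact key x
  · intro x
    have hRne : R x ≠ 0 := ne_of_gt (hRpos x)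
    have hdf : HasDerivAt f
        (((3 * x ^ 2 * H x + x ^ 3 * ((ym ^ 2 + 1) * (2 * x) + (3 * ym ^ 2 + yp * ym + 2))) * R x
          - x ^ 3 * H x * ((3 * yp ^ 2 + ym ^ 2 + 3 * yp * ym + 1) * (2 * x) +
              (3 * yp ^ 2 + yp * ym + 2))) / (R x) ^ 2) x := by
      rw [hf]
      exact (hg x).div (hRd x) hRne
    have heq : deriv f x = 3 * δ * x ^ 2 * (x + 1) ^ 2 * ((x + η) ^ 2 + θ) / (R x) ^ 2 := by
      rw [hdf.deriv, key x]
    refine ⟨heq, ?_⟩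
    rw [heq]
    have : (0:ℝ) ≤ 3 * δ * x ^ 2 * (x + 1) ^ 2 * ((x + η) ^ 2 + θ) := by positivity
    positivity
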